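/- Let $h(x) = (x^{b_1}, \dots, x^{b_n})$ be a monomial map on the positive orthant with $B = (b_{ij})$ invertible and the Jacobian determinant of $h$ constant. For $\alpha \in \mathbb{R}^n$, let $\tilde\alpha$ be the exponent vector such that $x^\alpha = z^{\tilde\alpha}$ under the substitution $z = h(x)$, i.e., $\tilde\alpha = (B^T)^{-1}\alpha$. Then for each $i$, the $i$-th component $\tilde\alpha_i$ equals the common value $t$ such that $(t, t, \dots, t)$ lies in the affine hyperplane $\beta_i + \alpha$, where $\beta_i$ is the hyperplane through the origin spanned by $\{b_j : j \ne i\}$. -/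

import Mathlib

open Set

/-- Lemma 2.5: under a constant-Jacobian monomial change of variables `z = h(x)` with exponent
matrix `B` (rows `b_i`), the `i`-th component of the transformed exponent
`α̃ = (Bᵀ)⁻¹ α` of a monomial `x^α` is the value `t` such that the diagonal point `(t,…,t)`
lies in the affine hyperplane `α + span{b_j : j ≠ i}`. -/
theorem stmt8 {n : ℕ} (B : Matrix (Fin n) (Fin n) ℝ) (hdet : B.det ≠ 0)
    (hsum : ∀ j, ∑ i, B i j = 1) (α : Fin n → ℝ) :
    ∀ i : Fin n,
      ((fun _ => (B.transpose)⁻¹.mulVec α i) - α : Fin n → ℝ) ∈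
        Submodule.span ℝ {v : Fin n → ℝ | ∃ j, j ≠ i ∧ v = B j} := by
  intro i
  have hBT : IsUnit (B.transpose).det := by
    simpa [Matrix.det_transpose] using hdet.isUnit
  set w := (B.transpose)⁻¹.mulVec α with hw
  have hα : B.transpose.mulVec w = α := by
    rw [hw, Matrix.mulVec_mulVec, Matrix.mul_nonsing_inv _ hBT, Matrix.one_mulVec]
  have key : ((fun _ => w i) - α : Fin n → ℝ) = ∑ j, (w i - w j) • B j := by
    funext k
    have h1 : α k = ∑ j, w j * B j k := by
      rw [← hα]; simp [Matrix.mulVec, dotProduct, Matrix.transpose, mul_comm]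
    have h2 : ∑ j, w i * B j k = w i := by
      rw [← Finset.mul_sum, hsum k, mul_one]
    simp [h1, sub_mul, Finset.sum_sub_distrib, h2, Finset.sum_apply]
  rw [key]
  refine Submodule.sum_mem _ fun j _ => ?_
  by_cases hj : j = i
  · simp [hj]
  · exact Submodule.smul_mem _ _ (Submodule.subset_span ⟨j, hj, rfl⟩)
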